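/- The solution of the algebraic path problem is idempotent: for every R-matrix M on a set X, F(F(M)) = F(M), where F(M) = ⨆_{n≥0} Mⁿ. (This is the content of the statement that the adjunction F ⊣ U between R-matrices and R-categories is idempotent.) -/

import Mathlib

open IsQuantale

section Defs

variable {R : Type*} [CompleteLattice R] [CommMonoid R]

/-- The matrix product of two `R`-matrices: `(M N)(i,k) = ⨆ j, M i j * N j k`. -/
def matMul {X : Type*} (M N : X → X → R) : X → X → R :=
  fun i k => ⨆ j, M i j * N j k

/-- The identity `R`-matrix `1_X`: `1` on the diagonal and `⊥` off the diagonal. -/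
def matId (X : Type*) : X → X → R :=
  fun i j => ⨆ _ : i = j, (1 : R)

/-- The `n`-fold matrix power, with `M⁰ = 1_X`. -/
def matPow {X : Type*} (M : X → X → R) : ℕ → X → X → R
  | 0 => matId X
  | n + 1 => matMul M (matPow M n)

/-- The solution of the algebraic path problem: `F(M) = ⨆ n, Mⁿ`. -/
def pathF {X : Type*} (M : X → X → R) : X → X → R :=
  fun i j => ⨆ n, matPow M n i j

/-- An `R`-category on `X` is an `R`-matrix `C` with `1_X ≤ C` and `C·C ≤ C`. -/
def IsRCat {X : Type*} (C : X → X → R) : Prop :=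
  matId X ≤ C ∧ matMul C C ≤ C

/-- The pushforward of an `R`-matrix along a function. -/
def pushforward {X Y : Type*} (f : X → Y) (M : X → X → R) : Y → Y → R :=
  fun y y' => ⨆ p : {q : X × X // f q.1 = y ∧ f q.2 = y'}, M p.1.1 p.1.2

/-- The block sum `M ⊕ N` of two `R`-matrices on the disjoint union. -/
def blockSum {X Y : Type*} (M : X → X → R) (N : Y → Y → R) : (X ⊕ Y) → (X ⊕ Y) → R
  | Sum.inl x, Sum.inl x' => M x x'
  | Sum.inr y, Sum.inr y' => N y y'
  | _, _ => ⊥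

/-- A vertex `v` is a source of `M` if `M c v = ⊥` for all `c`. -/
def IsSource {X : Type*} (M : X → X → R) (v : X) : Prop := ∀ c, M c v = ⊥

/-- A vertex `v` is a sink of `M` if `M v c = ⊥` for all `c`. -/
def IsSink {X : Type*} (M : X → X → R) (v : X) : Prop := ∀ c, M v c = ⊥

end Defs

/-- The relation generating the pushout of sets of `f : Z → X` and `g : Z → Y`. -/
def pushoutRel {Z X Y : Type*} (f : Z → X) (g : Z → Y) : (X ⊕ Y) → (X ⊕ Y) → Prop :=
  fun p q => ∃ z, p = Sum.inl (f z) ∧ q = Sum.inr (g z)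

/-- The pushout of sets `X +_Z Y`: the quotient of the disjoint union `X ⊕ Y`
by the equivalence relation generated by `f z ∼ g z`. -/
def SetPushout {Z X Y : Type*} (f : Z → X) (g : Z → Y) : Type _ :=
  Quot (pushoutRel f g)

/-- The first injection `X → X +_Z Y` into the pushout of sets. -/
def poInl {Z X Y : Type*} (f : Z → X) (g : Z → Y) : X → SetPushout f g :=
  fun x => Quot.mk _ (Sum.inl x)

/-- The second injection `Y → X +_Z Y` into the pushout of sets. -/
def poInr {Z X Y : Type*} (f : Z → X) (g : Z → Y) : Y → SetPushout f g :=
  fun y => Quot.mk _ (Sum.inr y)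

section Aux

variable {R : Type*} [CompleteLattice R] [CommMonoid R] [IsQuantale R] {X : Type*}

private lemma matId_apply_self (i : X) : (matId X : X → X → R) i i = 1 := by
  simp [matId]

private lemma bot_mul' (a : R) : (⊥ : R) * a = ⊥ := by
  have h : (⨆ _ : Empty, (1 : R)) * a = ⨆ _ : Empty, (1 : R) * a :=
    Quantale.iSup_mul_distrib
  simpa [iSup_of_empty] using h

private lemma matMul_pow_le (M : X → X → R) (m n : ℕ) :
    matMul (matPow M m) (matPow M n) ≤ matPow M (m + n) := by
  induction m with
  | zero =>
    intro i k
    simp only [matMul, matPow, iSup_le_iff]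
    intro j
    rcases eq_or_ne i j with rfl | h
    · rw [matId_apply_self, one_mul]; simp [Nat.zero_add]
    · have hb : (matId X : X → X → R) i j = ⊥ := by simp [matId, h]
      rw [hb, bot_mul']
      exact bot_le
  | succ m ih =>
    intro i k
    simp only [matMul, matPow, Quantale.iSup_mul_distrib, iSup_le_iff]
    intro j l
    have : M i l * matPow M m l j * matPow M n j k
        ≤ M i l * matPow M (m + n) l k := by
      rw [mul_assoc]
      refine mul_le_mul_right ?_ _
      calc matPow M m l j * matPow M n j k
          ≤ ⨆ j', matPow M m l j' * matPow M n j' k :=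
            le_iSup (fun j' => matPow M m l j' * matPow M n j' k) j
        _ = matMul (matPow M m) (matPow M n) l k := rfl
        _ ≤ matPow M (m + n) l k := ih l k
    refine this.trans ?_
    show M i l * matPow M (m + n) l k ≤ matPow M (m + 1 + n) i k
    have h1 : m + 1 + n = (m + n) + 1 := by omega
    rw [h1]
    exact le_iSup (fun l' => M i l' * matPow M (m + n) l' k) l

private lemma matPow_le_pathF (M : X → X → R) (n : ℕ) : matPow M n ≤ pathF M :=
  fun i j => le_iSup (fun n => matPow M n i j) n

private lemma pathF_isRCat (M : X → X → R) : IsRCat (pathF M) := by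
  constructor
  · exact (le_refl (matPow M 0)).trans (matPow_le_pathF M 0)
  · intro i k
    simp only [matMul, pathF, Quantale.iSup_mul_distrib, Quantale.mul_iSup_distrib, iSup_le_iff]
    intro j a b
    have := (le_iSup (fun j' => matPow M b i j' * matPow M a j' k) j).trans
      (matMul_pow_le M b a i k)
    exact this.trans (le_iSup (fun n' => matPow M n' i k) (b + a))

private lemma pathF_of_isRCat {C : X → X → R} (h : IsRCat C) : pathF C = C := by
  apply le_antisymm
  · intro i j
    simp only [pathF, iSup_le_iff]
    intro n
    induction n generalizing i j with
    | zero => exact h.1 i j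
    | succ n ih =>
      refine le_trans ?_ (h.2 i j)
      simp only [matPow, matMul, iSup_le_iff]
      intro l
      exact le_trans (mul_le_mul_right (ih l j) _)
        (le_iSup (fun l' => C i l' * C l' j) l)
  · intro i j
    have : C i j = C i j * matId (R := R) X j j := by rw [matId_apply_self, mul_one]
    calc C i j = C i j * matId (R := R) X j j := this
      _ ≤ ⨆ k, C i k * matId (R := R) X k j := le_iSup (fun k => C i k * matId (R := R) X k j) j
      _ = matPow C 1 i j := by
          simp only [matPow, matMul]
      _ ≤ pathF C i j := matPow_le_pathF C 1 i j

end Aux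

/-- The solution of the algebraic path problem is idempotent:
`F(F(M)) = F(M)` for every `R`-matrix `M` on `X`. -/
theorem pathF_idempotent {R : Type*} [CompleteLattice R] [CommMonoid R] [IsQuantale R]
    {X : Type*} (M : X → X → R) :
    pathF (pathF M) = pathF M :=
  pathF_of_isRCat (pathF_isRCat M)
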